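/- Let μ be a growth rate, Ψ the evolution operator of x' = A(t)x, and V : ℝ × ℝⁿ → ℝ a function satisfying |V(τ,x)| ≤ C μ(τ)^{sign(τ)ε} ‖x‖ for all τ, x, where C > 0 and ε ≥ 0. Let α < 0, β < 0, and for each τ ∈ ℝ let 𝒢_τ^s and 𝒢_τ^u be subspaces of ℝⁿ with Ψ(t,τ)𝒢_τ^s = 𝒢_t^s and Ψ(t,τ)𝒢_τ^u = 𝒢_t^u for all t, τ. Assume: V(τ,x) ≤ 0 for x ∈ 𝒢_τ^s and V(τ,x) ≥ 0 for x ∈ 𝒢_τ^u; for x ∈ 𝒢_τ^u, V(t, Ψ(t,τ)x) ≥ (μ(τ)/μ(t))^{α} V(τ,x) for all t ≥ τ; for x ∈ 𝒢_τ^s, |V(t, Ψ(t,τ)x)| ≤ (μ(t)/μ(τ))^{β} |V(τ,x)| for all t ≥ τ; and |V(τ,x)| ≥ μ(τ)^{−sign(τ)ε} ‖x‖ / C for x ∈ 𝒢_τ^s ∪ 𝒢_τ^u. Then for all t ≥ τ: ‖Ψ(t,τ)x‖ ≤ C² (μ(t)/μ(τ))^{β + sign(t)ε} μ(τ)^{2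 sign(τ)ε} ‖x‖ for every x ∈ 𝒢_τ^s, and ‖Ψ(t,τ)^{−1} y‖ ≤ C² (μ(τ)/μ(t))^{−α + sign(τ)ε} μ(t)^{2 sign(t)ε} ‖y‖ for every y ∈ 𝒢_t^u. -/

import Mathlib

open Filter MeasureTheory
open scoped Topology RealInnerProductSpace

noncomputable section

/-- Euclidean space `ℝⁿ`. -/
abbrev Euc (n : ℕ) := EuclideanSpace ℝ (Fin n)

/-- `μ` is a growth rate: strictly increasing, positive, `μ 0 = 1`,
`μ(t) → +∞` as `t → +∞` and `μ(t) → 0` as `t → -∞`. -/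
def IsGrowthRate (μ : ℝ → ℝ) : Prop :=
  StrictMono μ ∧ (∀ t, 0 < μ t) ∧ μ 0 = 1 ∧
    Filter.Tendsto μ Filter.atTop Filter.atTop ∧
    Filter.Tendsto μ Filter.atBot (nhds 0)

/-- `Ψ` is the evolution operator of the linear equation `x' = A(t) x`. -/
def IsEvolution {n : ℕ} (A : ℝ → Euc n →L[ℝ] Euc n) (Ψ : ℝ → ℝ → Euc n →L[ℝ] Euc n) : Prop :=
  (∀ s, Ψ s s = ContinuousLinearMap.id ℝ (Euc n)) ∧
  (∀ t r s, (Ψ t r).comp (Ψ r s) = Ψ t s) ∧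
  (∀ s x₀ t, HasDerivAt (fun r => Ψ r s x₀) (A t (Ψ t s x₀)) t)

/-- Nonuniform μ-dichotomy for the evolution operator `Ψ` with projections `π`
and constants `D, λs, λu, ν, ω`. -/
def HasMuDichotomy {n : ℕ} (μ : ℝ → ℝ) (Ψ : ℝ → ℝ → Euc n →L[ℝ] Euc n)
    (π : ℝ → Euc n →L[ℝ] Euc n) (D lams lamu ν ω : ℝ) : Prop :=
  (∀ t, (π t).comp (π t) = π t) ∧
  (∀ t s, (π t).comp (Ψ t s) = (Ψ t s).comp (π s)) ∧
  1 ≤ D ∧ lams < 0 ∧ 0 < lamu ∧ 0 ≤ ν ∧ 0 ≤ ω ∧ lams + ν < 0 ∧ 0 < lamu - ω ∧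
  (∀ t s, s ≤ t → ‖(Ψ t s).comp (π s)‖ ≤ D * (μ t / μ s) ^ lams * μ s ^ (Real.sign s * ν)) ∧
  (∀ t s, t ≤ s → ‖(Ψ t s).comp (1 - π s)‖ ≤ D * (μ t / μ s) ^ lamu * μ s ^ (Real.sign s * ω))

/-- Nonuniform μ-bounded growth for `Ψ` with constants `D, λmax, θ`. -/
def HasMuBoundedGrowth {n : ℕ} (μ : ℝ → ℝ) (Ψ : ℝ → ℝ → Euc n →L[ℝ] Euc n)
    (D lamMax θ : ℝ) : Prop :=
  1 ≤ D ∧ 0 < lamMax ∧ 0 ≤ θ ∧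
  ∀ t s, ‖Ψ t s‖ ≤ D * (μ t / μ s) ^ (Real.sign (t - s) * lamMax) * μ s ^ (Real.sign s * θ)

/-- Local boundedness condition (bou-u). -/
def LocBdd {n : ℕ} (μ : ℝ → ℝ) (Ψ : ℝ → ℝ → Euc n →L[ℝ] Euc n) (Dt c lamt : ℝ) : Prop :=
  1 ≤ Dt ∧ 0 < c ∧ 0 < lamt ∧
  ∀ t s, s ∈ Set.Icc (t - c) (t + c) → ‖Ψ t s‖ ≤ Dt * μ |t| ^ lamt

/-- `f` belongs to the class `𝒜_f`: `f(t,0) = 0` and `f(t,·)` is Lipschitz with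
constant `φ(t) = δf · μ(t)^{-1-sign(t)θ} · μ'(t)`. -/
def MemClassAf {n : ℕ} (μ μ' : ℝ → ℝ) (θ δf : ℝ) (f : ℝ → Euc n → Euc n) : Prop :=
  (∀ t, f t 0 = 0) ∧
  ∀ t x y, ‖f t x - f t y‖ ≤ (δf * μ t ^ (-1 - Real.sign t * θ) * μ' t) * ‖x - y‖

/-- `X t τ x₀` is the (unique, globally defined) solution of `x' = A(t)x + f(t,x)`
with `X τ τ x₀ = x₀`. -/
def IsSolutionFamily {n : ℕ} (A : ℝ → Euc n →L[ℝ] Euc n) (f : ℝ → Euc n → Euc n)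
    (X : ℝ → ℝ → Euc n → Euc n) : Prop :=
  (∀ τ x₀, X τ τ x₀ = x₀) ∧
  ∀ τ x₀ t, HasDerivAt (fun r => X r τ x₀) (A t (X t τ x₀) + f t (X t τ x₀)) t


private lemma real_sign_mono' {a b : ℝ} (h : a ≤ b) : Real.sign a ≤ Real.sign b := by
  rcases lt_trichotomy a 0 with ha | ha | ha <;>
    rcases lt_trichotomy b 0 with hb | hb | hb <;>
    simp_all [Real.sign_of_neg, Real.sign_of_pos, Real.sign_zero] <;> linarith

private lemma rpow_sign_le_one' {μ : ℝ → ℝ} (hsm : StrictMono μ) (hpos : ∀ t, 0 < μ t)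
    (h0 : μ 0 = 1) {τ t ε : ℝ} (hε : 0 ≤ ε) (hτt : τ ≤ t) :
    μ τ ^ ((Real.sign t - Real.sign τ) * ε) ≤ 1 := by
  rcases lt_trichotomy τ 0 with h | h | h
  · exact Real.rpow_le_one (hpos τ).le (by rw [← h0]; exact (hsm h).le)
      (mul_nonneg (sub_nonneg.2 (real_sign_mono' hτt)) hε)
  · simp [h, h0]
  · have ht : 0 < t := lt_of_lt_of_le h hτt
    rw [Real.sign_of_pos h, Real.sign_of_pos ht]
    simp

private lemma one_le_rpow_sign' {μ : ℝ → ℝ} (hsm : StrictMono μ) (hpos : ∀ t, 0 < μ t)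
    (h0 : μ 0 = 1) {τ t ε : ℝ} (hε : 0 ≤ ε) (hτt : τ ≤ t) :
    1 ≤ μ t ^ ((Real.sign t - Real.sign τ) * ε) := by
  rcases lt_trichotomy t 0 with h | h | h
  · have hτ : τ < 0 := lt_of_le_of_lt hτt h
    rw [Real.sign_of_neg h, Real.sign_of_neg hτ]
    simp
  · simp [h, h0]
  · have h1 : 1 ≤ μ t := by rw [← h0]; exact (hsm h).le
    calc (1:ℝ) = μ t ^ (0:ℝ) := (Real.rpow_zero _).symm
      _ ≤ _ := Real.rpow_le_rpow_of_exponent_le h1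
          (mul_nonneg (sub_nonneg.2 (real_sign_mono' hτt)) hε)

private lemma lower_rearrange' {m C s r e : ℝ} (hm : 0 < m) (hC : 0 < C)
    (h : m ^ (-e) * s / C ≤ r) : s ≤ C * m ^ e * r := by
  have hmul : m ^ e * m ^ (-e) = 1 := by rw [← Real.rpow_add hm]; simp
  have hgoal := mul_le_mul_of_nonneg_left h
    (by positivity : (0:ℝ) ≤ C * m ^ e)
  have heq : C * m ^ e * (m ^ (-e) * s / C) = (m ^ e * m ^ (-e)) * ((C / C) * s) := by ring
  rw [hmul, div_self hC.ne', one_mul, one_mul] at heq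
  linarith [heq ▸ hgoal]

private lemma grow_rearrange' {d a u v : ℝ} (hd : 0 < d) (h : d ^ a * u ≤ v) :
    u ≤ d ^ (-a) * v := by
  have hmul : d ^ (-a) * d ^ a = 1 := by rw [← Real.rpow_add hd]; simp
  have hgoal := mul_le_mul_of_nonneg_left h (Real.rpow_pos_of_pos hd (-a)).le
  calc u = d ^ (-a) * (d ^ a * u) := by rw [← mul_assoc, hmul, one_mul]
    _ ≤ _ := hgoal

private lemma algebra_s' {mt mτ C β e st sτ nx nz : ℝ} (hmt : 0 < mt) (hmτ : 0 < mτ)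
    (hC : 0 < C) (hnx : 0 ≤ nx)
    (hfac : mτ ^ ((st - sτ) * e) ≤ 1)
    (h : nz ≤ C * mt ^ (st * e) * ((mt / mτ) ^ β * (C * mτ ^ (sτ * e) * nx))) :
    nz ≤ C ^ 2 * (mt / mτ) ^ (β + st * e) * mτ ^ (2 * sτ * e) * nx := by
  have hd : 0 < mt / mτ := div_pos hmt hmτ
  have heq : C * mt ^ (st * e) * ((mt / mτ) ^ β * (C * mτ ^ (sτ * e) * nx))
      = C ^ 2 * (mt / mτ) ^ (β + st * e) * mτ ^ (2 * sτ * e) * nx * mτ ^ ((st - sτ) * e) := by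
    rw [Real.rpow_add hd]
    simp only [Real.div_rpow hmt.le hmτ.le]
    have e1 : (2 * sτ * e) = sτ * e + sτ * e := by ring
    have e2 : ((st - sτ) * e) = st * e - sτ * e := by ring
    rw [e1, Real.rpow_add hmτ, e2, Real.rpow_sub hmτ]
    have h1 : mτ ^ (st * e) ≠ 0 := (Real.rpow_pos_of_pos hmτ _).ne'
    have h2 : mτ ^ (sτ * e) ≠ 0 := (Real.rpow_pos_of_pos hmτ _).ne'
    field_simp
  rw [heq] at h
  have hT : 0 ≤ C ^ 2 * (mt / mτ) ^ (β + st * e) * mτ ^ (2 * sτ * e) * nx := by positivity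
  calc nz ≤ _ := h
    _ ≤ _ * 1 := mul_le_mul_of_nonneg_left hfac hT
    _ = _ := mul_one _

/-- Proposition: estimates from a strict Lyapunov function on
invariant subspaces `𝒢_τ^s`, `𝒢_τ^u`.  Note that `Ψ τ t = Ψ(t,τ)⁻¹`. -/
theorem estimates_from_strict_lyapunov
    {n : ℕ} (hn : 1 ≤ n)
    (μ : ℝ → ℝ) (hμ : IsGrowthRate μ)
    (A : ℝ → Euc n →L[ℝ] Euc n) (Ψ : ℝ → ℝ → Euc n →L[ℝ] Euc n)
    (hΨ : IsEvolution A Ψ)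
    (V : ℝ → Euc n → ℝ) (C ε : ℝ) (hC : 0 < C) (hε : 0 ≤ ε)
    (hVbound : ∀ τ : ℝ, ∀ x : Euc n, |V τ x| ≤ C * μ τ ^ (Real.sign τ * ε) * ‖x‖)
    (α β : ℝ) (hα : α < 0) (hβ : β < 0)
    (Gs Gu : ℝ → Submodule ℝ (Euc n))
    (hGsInv : ∀ t τ : ℝ, (Gs τ).map (Ψ t τ).toLinearMap = Gs t)
    (hGuInv : ∀ t τ : ℝ, (Gu τ).map (Ψ t τ).toLinearMap = Gu t)
    (hVs : ∀ τ : ℝ, ∀ x ∈ Gs τ, V τ x ≤ 0)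
    (hVu : ∀ τ : ℝ, ∀ x ∈ Gu τ, 0 ≤ V τ x)
    (hVuGrow : ∀ τ t : ℝ, τ ≤ t → ∀ x ∈ Gu τ,
      (μ τ / μ t) ^ α * V τ x ≤ V t (Ψ t τ x))
    (hVsDecay : ∀ τ t : ℝ, τ ≤ t → ∀ x ∈ Gs τ,
      |V t (Ψ t τ x)| ≤ (μ t / μ τ) ^ β * |V τ x|)
    (hVlow : ∀ τ : ℝ, ∀ x : Euc n, x ∈ Gs τ ∨ x ∈ Gu τ →
      μ τ ^ (-(Real.sign τ * ε)) * ‖x‖ / C ≤ |V τ x|) :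
    ∀ τ t : ℝ, τ ≤ t →
      (∀ x ∈ Gs τ,
        ‖Ψ t τ x‖ ≤
          C ^ 2 * (μ t / μ τ) ^ (β + Real.sign t * ε) *
            μ τ ^ (2 * Real.sign τ * ε) * ‖x‖) ∧
      (∀ y ∈ Gu t,
        ‖Ψ τ t y‖ ≤
          C ^ 2 * (μ τ / μ t) ^ (-α + Real.sign τ * ε) *
            μ t ^ (2 * Real.sign t * ε) * ‖y‖) := by
  
  obtain ⟨hsm, hpos, h0, -, -⟩ := hμ
  intro τ t hτt
  have hmt := hpos t
  have hmτ := hpos τ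
  have hfacs : μ τ ^ ((Real.sign t - Real.sign τ) * ε) ≤ 1 :=
    rpow_sign_le_one' hsm hpos h0 hε hτt
  have hfacu : 1 ≤ μ t ^ ((Real.sign t - Real.sign τ) * ε) :=
    one_le_rpow_sign' hsm hpos h0 hε hτt
  have hfacu' : μ t ^ ((Real.sign τ - Real.sign t) * ε) ≤ 1 := by
    have he : (Real.sign τ - Real.sign t) * ε = -((Real.sign t - Real.sign τ) * ε) := by ring
    rw [he, Real.rpow_neg hmt.le]
    exact inv_le_one_of_one_le₀ hfacu
  constructor
  · intro x hx
    set z := Ψ t τ x with hz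
    have hzmem : z ∈ Gs t := by
      rw [← hGsInv t τ]; exact Submodule.mem_map_of_mem hx
    have h1 : ‖z‖ ≤ C * μ t ^ (Real.sign t * ε) * |V t z| :=
      lower_rearrange' hmt hC (hVlow t z (Or.inl hzmem))
    have h2 : |V t z| ≤ (μ t / μ τ) ^ β * (C * μ τ ^ (Real.sign τ * ε) * ‖x‖) :=
      le_trans (hVsDecay τ t hτt x hx)
        (mul_le_mul_of_nonneg_left (hVbound τ x)
          (Real.rpow_pos_of_pos (div_pos hmt hmτ) β).le)
    have h3 : ‖z‖ ≤ C * μ t ^ (Real.sign t * ε) *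
        ((μ t / μ τ) ^ β * (C * μ τ ^ (Real.sign τ * ε) * ‖x‖)) :=
      le_trans h1 (mul_le_mul_of_nonneg_left h2 (by positivity))
    exact algebra_s' hmt hmτ hC (norm_nonneg x) hfacs h3
  · intro y hy
    set x := Ψ τ t y with hxdef
    have hxmem : x ∈ Gu τ := by
      rw [← hGuInv τ t]; exact Submodule.mem_map_of_mem hy
    have hxy : Ψ t τ x = y := by
      have h := hΨ.2.1 t τ t
      rw [hΨ.1 t] at h
      calc Ψ t τ (Ψ τ t y) = ((Ψ t τ).comp (Ψ τ t)) y := rfl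
        _ = y := by rw [h]; rfl
    have hgr : V τ x ≤ (μ τ / μ t) ^ (-α) * V t y := by
      have h := hVuGrow τ t hτt x hxmem
      rw [hxy] at h
      exact grow_rearrange' (div_pos hmτ hmt) h
    have hchain : |V τ x| ≤ (μ τ / μ t) ^ (-α) * (C * μ t ^ (Real.sign t * ε) * ‖y‖) := by
      rw [abs_of_nonneg (hVu τ x hxmem)]
      refine le_trans hgr (mul_le_mul_of_nonneg_left ?_
        (Real.rpow_pos_of_pos (div_pos hmτ hmt) (-α)).le)
      exact le_trans (le_abs_self _) (hVbound t y)
    have h1 : ‖x‖ ≤ C * μ τ ^ (Real.sign τ * ε) * |V τ x| :=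
      lower_rearrange' hmτ hC (hVlow τ x (Or.inr hxmem))
    have h3 : ‖x‖ ≤ C * μ τ ^ (Real.sign τ * ε) *
        ((μ τ / μ t) ^ (-α) * (C * μ t ^ (Real.sign t * ε) * ‖y‖)) :=
      le_trans h1 (mul_le_mul_of_nonneg_left hchain (by positivity))
    exact algebra_s' hmτ hmt hC (norm_nonneg y) hfacu' h3
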